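/- The First Come, First Matched policy is sub-additive: for any two finite arrival words z' and z'' over the vertex set of the compatibility graph, |Q_FCFM(z'z'')| ≤ |Q_FCFM(z')| + |Q_FCFM(z'')|, where Q_FCFM(z) is the word of unmatched items after matching the arrivals z under FCFM starting from an empty system. -/

import Mathlib

set_option linter.unusedSectionVars false

variable {V : Type*} [DecidableEq V]

/-- One step of First Come, First Matched: the arriving item of class `v` is matched
with (removes) the oldest compatible item of the buffer `w` (listed oldest first), and
joins the buffer if there is none. -/
def fcfmStep (G : SimpleGraph V) [DecidableRel G.Adj] (w : List V) (v : V) : List V :=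
  match w.findIdx? (fun u => decide (G.Adj u v)) with
  | some k => w.eraseIdx k
  | none => w ++ [v]

/-- The buffer content after processing the arrival word `z` under FCFM from an empty
system. -/
def fcfmQ (G : SimpleGraph V) [DecidableRel G.Adj] (z : List V) : List V :=
  z.foldl (fcfmStep G) []

lemma fcfmStep_of_some (G : SimpleGraph V) [DecidableRel G.Adj] {w : List V} {v : V} {k : ℕ}
    (h : w.findIdx? (fun u => decide (G.Adj u v)) = some k) :
    fcfmStep G w v = w.eraseIdx k := by
  unfold fcfmStep; rw [h]

lemma fcfmStep_of_none (G : SimpleGraph V) [DecidableRel G.Adj] {w : List V} {v : V}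
    (h : w.findIdx? (fun u => decide (G.Adj u v)) = none) :
    fcfmStep G w v = w ++ [v] := by
  unfold fcfmStep; rw [h]

/-- Two buffers differ by at most one insertion. -/
def fcfmRel (w₁ w₂ : List V) : Prop :=
  (w₁.Sublist w₂ ∧ w₂.length ≤ w₁.length + 1) ∨
  (w₂.Sublist w₁ ∧ w₁.length ≤ w₂.length + 1)

lemma fcfmRel.symm {w₁ w₂ : List V} (h : fcfmRel w₁ w₂) : fcfmRel w₂ w₁ := Or.symm h

lemma fcfmRel_refl (w : List V) : fcfmRel w w := Or.inl ⟨List.Sublist.refl w, by omega⟩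

/-- Decompose a one-insertion pair. -/
lemma sublist_succ_decomp : ∀ {w₁ w₂ : List V}, w₁.Sublist w₂ →
    w₂.length = w₁.length + 1 → ∃ s c t, w₁ = s ++ t ∧ w₂ = s ++ c :: t := by
  intro w₁ w₂ h
  induction h with
  | slnil => intro h; simp at h
  | @cons l₁ l₂ a h ih =>
    intro hlen
    simp only [List.length_cons] at hlen
    have : l₁ = l₂ := h.eq_of_length (by omega)
    subst this
    exact ⟨[], a, l₁, by simp, by simp⟩
  | @cons_cons l₁ l₂ a h ih =>
    intro hlen
    simp only [List.length_cons] at hlen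
    obtain ⟨s, c, t, h1, h2⟩ := ih (by omega)
    exact ⟨a :: s, c, t, by simp [h1], by simp [h2]⟩

lemma fcfmStep_insert (G : SimpleGraph V) [DecidableRel G.Adj] (s : List V) (c : V)
    (t : List V) (v : V) :
    fcfmRel (fcfmStep G (s ++ t) v) (fcfmStep G (s ++ c :: t) v) := by
  set p : V → Bool := fun u => decide (G.Adj u v) with hp
  rcases hs : s.findIdx? p with _ | j
  · -- no compatible item in s
    have hnone : ∀ {l : List V}, List.findIdx? p (s ++ l) =
        (List.findIdx? p l).map (· + s.length) := by
      intro l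
      rw [List.findIdx?_append, hs]
      rfl
    by_cases hc : p c = true
    · -- c is compatible: the right buffer erases c and becomes s ++ t
      have hfc : List.findIdx? p (c :: t) = some 0 := by
        simp [List.findIdx?_cons, hc]
      rw [fcfmStep_of_some G (w := s ++ c :: t) (k := 0 + s.length) (by rw [hnone, hfc]; rfl)]
      rw [show (s ++ c :: t).eraseIdx (0 + s.length) = s ++ t by
        rw [List.eraseIdx_append_of_length_le (by omega)]; simp]
      rcases ht : List.findIdx? p t with _ | j
      · -- left buffer appends v
        rw [fcfmStep_of_none G (by rw [hnone, ht]; rfl)]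
        refine Or.inr ⟨(s ++ t).sublist_append_left [v], by simp; omega⟩
      · -- left buffer erases an item
        rw [fcfmStep_of_some G (k := j + s.length) (by rw [hnone, ht]; rfl)]
        refine Or.inl ⟨List.eraseIdx_sublist _ _, ?_⟩
        have := List.length_eraseIdx (l := s ++ t) (i := j + s.length)
        split at this <;> omega
    · -- c incompatible
      have hc' : p c = false := by simp only [Bool.not_eq_true] at hc; exact hc
      have hfc : List.findIdx? p (c :: t) = (List.findIdx? p t).map (· + 1) := by
        simp [List.findIdx?_cons, hc']
      rcases ht : List.findIdx? p t with _ | j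
      · -- none anywhere: append v to both
        rw [fcfmStep_of_none G (by rw [hnone, ht]; rfl),
            fcfmStep_of_none G (by rw [hnone, hfc, ht]; rfl)]
        refine Or.inl ⟨?_, by simp only [List.length_append, List.length_cons]; omega⟩
        have h1 : (s ++ t).Sublist (s ++ c :: t) :=
          List.Sublist.append_left (List.sublist_cons_self c t) s
        exact h1.append_right [v]
      · -- erase the same item of t from both
        have hjt : j < t.length := (List.findIdx?_eq_some_iff_findIdx_eq.mp ht).1
        rw [fcfmStep_of_some G (k := j + s.length) (by rw [hnone, ht]; rfl),
            fcfmStep_of_some G (k := j + 1 + s.length) (by rw [hnone, hfc, ht]; rfl)]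
        rw [List.eraseIdx_append_of_length_le (l := s) (k := j + s.length) (by omega),
            List.eraseIdx_append_of_length_le (l := s) (k := j + 1 + s.length) (by omega)]
        have e1 : j + s.length - s.length = j := by omega
        have e2 : j + 1 + s.length - s.length = j + 1 := by omega
        rw [e1, e2]
        rw [show (c :: t).eraseIdx (j + 1) = c :: t.eraseIdx j from rfl]
        refine Or.inl ⟨List.Sublist.append_left (List.sublist_cons_self c _) s, ?_⟩
        simp [List.length_eraseIdx, hjt]
        omega
  · -- compatible item found in s: both erase the same item of s
    have hjs : j < s.length := (List.findIdx?_eq_some_iff_findIdx_eq.mp hs).1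
    have hsome : ∀ {l : List V}, List.findIdx? p (s ++ l) = some j := by
      intro l; rw [List.findIdx?_append, hs]; rfl
    rw [fcfmStep_of_some G hsome, fcfmStep_of_some G hsome]
    rw [List.eraseIdx_append_of_lt_length hjs, List.eraseIdx_append_of_lt_length hjs]
    refine Or.inl ⟨List.Sublist.append_left (List.sublist_cons_self c t) _, by simp only [List.length_append, List.length_cons]; omega⟩

lemma fcfmRel_step (G : SimpleGraph V) [DecidableRel G.Adj] {w₁ w₂ : List V} (v : V)
    (h : fcfmRel w₁ w₂) : fcfmRel (fcfmStep G w₁ v) (fcfmStep G w₂ v) := by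
  have key : ∀ {a b : List V}, a.Sublist b → b.length ≤ a.length + 1 →
      fcfmRel (fcfmStep G a v) (fcfmStep G b v) := by
    intro a b hab hlen
    rcases Nat.lt_or_ge a.length b.length with hlt | hge
    · obtain ⟨s, c, t, h1, h2⟩ := sublist_succ_decomp hab (by omega)
      subst h1; subst h2
      exact fcfmStep_insert G s c t v
    · have : a = b := hab.eq_of_length (le_antisymm hab.length_le hge)
      subst this
      exact fcfmRel_refl _
  rcases h with ⟨h1, h2⟩ | ⟨h1, h2⟩
  · exact key h1 h2
  · exact (key h1 h2).symm

lemma fcfmRel_foldl (G : SimpleGraph V) [DecidableRel G.Adj] (z : List V) :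
    ∀ {w₁ w₂ : List V}, fcfmRel w₁ w₂ →
      fcfmRel (z.foldl (fcfmStep G) w₁) (z.foldl (fcfmStep G) w₂) := by
  induction z with
  | nil => intro _ _ h; exact h
  | cons v z ih => intro w₁ w₂ h; exact ih (fcfmRel_step G v h)

lemma fcfmRel.length_le {w₁ w₂ : List V} (h : fcfmRel w₁ w₂) :
    w₁.length ≤ w₂.length + 1 := by
  rcases h with ⟨h1, _⟩ | ⟨_, h2⟩
  · have := h1.length_le; omega
  · exact h2

lemma fcfm_foldl_le (G : SimpleGraph V) [DecidableRel G.Adj] (w z : List V) :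
    (z.foldl (fcfmStep G) w).length ≤ w.length + (z.foldl (fcfmStep G) []).length := by
  induction w with
  | nil => simp
  | cons a w ih =>
    have hrel : fcfmRel (a :: w) w :=
      Or.inr ⟨List.sublist_cons_self a w, by simp⟩
    have := (fcfmRel_foldl G z hrel).length_le
    simp only [List.length_cons]
    omega

/-- **FCFM is sub-additive**: for any arrival words `z'`, `z''`,
`|Q_FCFM(z'z'')| ≤ |Q_FCFM(z')| + |Q_FCFM(z'')|`. -/
theorem fcfm_subadditive (G : SimpleGraph V) [DecidableRel G.Adj]
    (z' z'' : List V) :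
    (fcfmQ G (z' ++ z'')).length ≤ (fcfmQ G z').length + (fcfmQ G z'').length := by
  unfold fcfmQ
  rw [List.foldl_append]
  exact fcfm_foldl_le G (z'.foldl (fcfmStep G) []) z''
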